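/- Let E ∈ ℂ^{n×n} be Hermitian positive semidefinite of the block form E = [[E11, E12, E13],[E12*, E22, E23],[E13*, E23*, E33]], B = [[Σ_G],[0],[0]] with Σ_G positive definite of size n1 (partition sizes n1, n2, n3), and suppose for all purely imaginary s that rank([sE − (J−R), B]) = n where J is skew-Hermitian and R = [[R11, R12, 0],[R12*, Σ_R, 0],[0,0,0]] conformally partitioned. Then for all s with Re(s) = 0, rank([sE13 − J13; sE23 − J23; sE33 − J33]) = n3. -/

import Mathlib

open Matrix
open scoped ComplexOrder

/-- A matrix with full column rank has trivial kernel. -/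
lemma aux_mulVec_eq_zero {m n : Type*} [Fintype m] [Fintype n] [DecidableEq n]
    (A : Matrix m n ℂ) (h : A.rank = Fintype.card n) :
    ∀ v : n → ℂ, A.mulVec v = 0 → v = 0 := by
  rw [← Matrix.ker_mulVecLin_eq_bot_iff]
  have hadd := LinearMap.finrank_range_add_finrank_ker A.mulVecLin
  rw [Matrix.rank] at h
  rw [h, Module.finrank_fintype_fun_eq_card] at hadd
  have hker : Module.finrank ℂ (LinearMap.ker A.mulVecLin) = 0 := by omega
  exact Submodule.finrank_eq_zero.mp hker

/-- A matrix with full row rank has trivial left kernel. -/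
lemma aux_vecMul_eq_zero {m n : Type*} [Fintype m] [Fintype n] [DecidableEq m]
    (A : Matrix m n ℂ) (h : A.rank = Fintype.card m) :
    ∀ v : m → ℂ, A.vecMul v = 0 → v = 0 := by
  intro v hv
  have h' : Aᴴ.rank = Fintype.card m := by rw [Matrix.rank_conjTranspose]; exact h
  have := aux_mulVec_eq_zero Aᴴ h' (star v) ?_
  · have := congrArg star this
    simpa using this
  · rw [← Matrix.star_vecMul, hv]
    simp

/-- Equation (3.8): if for all purely imaginary s the matrix [sE − (J − R), B] has full
row rank n (with B = [Σ_G; 0; 0], Σ_G ≻ 0), then the third block column of sE − J has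
full column rank n3 for all purely imaginary s. -/
theorem stmt_19 {n1 n2 n3 : ℕ}
    (E11 R11 J11 SigG : Matrix (Fin n1) (Fin n1) ℂ)
    (E12 R12 J12 : Matrix (Fin n1) (Fin n2) ℂ)
    (E13 J13 : Matrix (Fin n1) (Fin n3) ℂ)
    (E22 SigR J22 : Matrix (Fin n2) (Fin n2) ℂ)
    (E23 J23 : Matrix (Fin n2) (Fin n3) ℂ)
    (E33 J33 : Matrix (Fin n3) (Fin n3) ℂ)
    (hE : (Matrix.fromBlocks E11 (Matrix.fromCols E12 E13)
        (Matrix.fromRows E12ᴴ E13ᴴ) (Matrix.fromBlocks E22 E23 E23ᴴ E33)).PosSemidef)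
    (hSigG : SigG.PosDef)
    (hJ : (Matrix.fromBlocks J11 (Matrix.fromCols J12 J13)
        (Matrix.fromRows (-J12ᴴ) (-J13ᴴ)) (Matrix.fromBlocks J22 J23 (-J23ᴴ) J33))ᴴ =
      -(Matrix.fromBlocks J11 (Matrix.fromCols J12 J13)
        (Matrix.fromRows (-J12ᴴ) (-J13ᴴ)) (Matrix.fromBlocks J22 J23 (-J23ᴴ) J33)))
    (hrank : ∀ s : ℂ, s.re = 0 →
      (Matrix.fromCols
          (s • Matrix.fromBlocks E11 (Matrix.fromCols E12 E13)
              (Matrix.fromRows E12ᴴ E13ᴴ) (Matrix.fromBlocks E22 E23 E23ᴴ E33) -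
            (Matrix.fromBlocks J11 (Matrix.fromCols J12 J13)
                (Matrix.fromRows (-J12ᴴ) (-J13ᴴ)) (Matrix.fromBlocks J22 J23 (-J23ᴴ) J33) -
              Matrix.fromBlocks R11 (Matrix.fromCols R12 0)
                (Matrix.fromRows R12ᴴ 0) (Matrix.fromBlocks SigR 0 0 0)))
          (Matrix.fromRows SigG (0 : Matrix (Fin n2 ⊕ Fin n3) (Fin n1) ℂ))).rank
        = n1 + n2 + n3) :
    ∀ s : ℂ, s.re = 0 →
      (Matrix.fromRows (s • E13 - J13)
        (Matrix.fromRows (s • E23 - J23) (s • E33 - J33))).rank = n3 := by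
  intro s hs
  -- conjugate of s is -s
  have hsconj : (starRingEnd ℂ) s = -s := by
    apply Complex.ext <;> simp [hs]
  -- Hermitian facts for the (3,3) blocks
  have hE33 : ∀ a b, (starRingEnd ℂ) (E33 a b) = E33 b a := by
    intro a b
    have := congrFun (congrFun hE.isHermitian (Sum.inr (Sum.inr b))) (Sum.inr (Sum.inr a))
    simpa [Matrix.conjTranspose_apply] using this
  have hJ33 : ∀ a b, (starRingEnd ℂ) (J33 a b) = -(J33 b a) := by
    intro a b
    have := congrFun (congrFun hJ (Sum.inr (Sum.inr b))) (Sum.inr (Sum.inr a))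
    simpa [Matrix.conjTranspose_apply] using this
  set C : Matrix (Fin n1 ⊕ (Fin n2 ⊕ Fin n3)) (Fin n3) ℂ :=
    Matrix.fromRows (s • E13 - J13)
      (Matrix.fromRows (s • E23 - J23) (s • E33 - J33)) with hC
  -- main step: C has trivial kernel
  have hinj : ∀ x : Fin n3 → ℂ, C.mulVec x = 0 → x = 0 := by
    intro x hx
    have hx1 : (s • E13 - J13).mulVec x = 0 := by
      funext j; have := congrFun hx (Sum.inl j); simpa [hC] using this
    have hx2 : (s • E23 - J23).mulVec x = 0 := by
      funext j; have := congrFun hx (Sum.inr (Sum.inl j)); simpa [hC] using this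
    have hx3 : (s • E33 - J33).mulVec x = 0 := by
      funext j; have := congrFun hx (Sum.inr (Sum.inr j)); simpa [hC] using this
    -- the big matrix
    set M := (Matrix.fromCols
          (s • Matrix.fromBlocks E11 (Matrix.fromCols E12 E13)
              (Matrix.fromRows E12ᴴ E13ᴴ) (Matrix.fromBlocks E22 E23 E23ᴴ E33) -
            (Matrix.fromBlocks J11 (Matrix.fromCols J12 J13)
                (Matrix.fromRows (-J12ᴴ) (-J13ᴴ)) (Matrix.fromBlocks J22 J23 (-J23ᴴ) J33) -
              Matrix.fromBlocks R11 (Matrix.fromCols R12 0)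
                (Matrix.fromRows R12ᴴ 0) (Matrix.fromBlocks SigR 0 0 0)))
          (Matrix.fromRows SigG (0 : Matrix (Fin n2 ⊕ Fin n3) (Fin n1) ℂ))) with hM
    have hMrank : M.rank = Fintype.card (Fin n1 ⊕ (Fin n2 ⊕ Fin n3)) := by
      rw [hrank s hs]; simp; omega
    set z : (Fin n1 ⊕ (Fin n2 ⊕ Fin n3)) → ℂ :=
      Sum.elim 0 (Sum.elim 0 (-(star x))) with hz
    have hzM : M.vecMul z = 0 := by
      funext j
      rcases j with (j | j | j) | j
      · -- first block column of A
        have h0 := congrArg (starRingEnd ℂ) (congrFun hx1 j)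
        simp only [Matrix.mulVec, dotProduct, map_sum, _root_.map_mul, Matrix.sub_apply,
          Matrix.smul_apply, map_sub, hsconj, smul_eq_mul, map_zero,
          Pi.zero_apply] at h0
        simp only [hM, hz, Matrix.vecMul, dotProduct, Pi.zero_apply,
          Fintype.sum_sum_type, Sum.elim_inl, Sum.elim_inr, zero_mul,
          Finset.sum_const_zero, zero_add, Matrix.fromCols,
          Matrix.of_apply, Matrix.sub_apply, Matrix.smul_apply, Matrix.fromBlocks_apply₂₁,
          Matrix.fromBlocks_apply₂₂, Matrix.fromRows_apply_inr, Matrix.conjTranspose_apply,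
          Matrix.neg_apply, Pi.star_apply, Pi.neg_apply, Matrix.zero_apply, mul_zero, neg_mul, Complex.star_def, smul_eq_mul]
        refine Eq.trans (Finset.sum_congr rfl fun i _ => ?_) h0
        ring
      · -- second block column of A
        have h0 := congrArg (starRingEnd ℂ) (congrFun hx2 j)
        simp only [Matrix.mulVec, dotProduct, map_sum, _root_.map_mul, Matrix.sub_apply,
          Matrix.smul_apply, map_sub, hsconj, smul_eq_mul, map_zero,
          Pi.zero_apply] at h0
        simp only [hM, hz, Matrix.vecMul, dotProduct, Pi.zero_apply,
          Fintype.sum_sum_type, Sum.elim_inl, Sum.elim_inr, zero_mul,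
          Finset.sum_const_zero, zero_add, Matrix.fromCols,
          Matrix.of_apply, Matrix.sub_apply, Matrix.smul_apply, Matrix.fromBlocks_apply₂₁,
          Matrix.fromBlocks_apply₂₂, Matrix.fromRows_apply_inr, Matrix.conjTranspose_apply,
          Matrix.neg_apply, Pi.star_apply, Pi.neg_apply, Matrix.zero_apply, mul_zero, neg_mul, Complex.star_def, smul_eq_mul]
        refine Eq.trans (Finset.sum_congr rfl fun i _ => ?_) h0
        ring
      · -- third block column of A
        have h0 := congrArg (starRingEnd ℂ) (congrFun hx3 j)
        simp only [Matrix.mulVec, dotProduct, map_sum, _root_.map_mul, Matrix.sub_apply,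
          Matrix.smul_apply, map_sub, hsconj, hE33, hJ33, smul_eq_mul, map_zero,
          Pi.zero_apply] at h0
        simp only [hM, hz, Matrix.vecMul, dotProduct, Pi.zero_apply,
          Fintype.sum_sum_type, Sum.elim_inl, Sum.elim_inr, zero_mul,
          Finset.sum_const_zero, zero_add, Matrix.fromCols,
          Matrix.of_apply, Matrix.sub_apply, Matrix.smul_apply, Matrix.fromBlocks_apply₂₁,
          Matrix.fromBlocks_apply₂₂, Matrix.fromRows_apply_inr, Matrix.conjTranspose_apply,
          Matrix.neg_apply, Pi.star_apply, Pi.neg_apply, Matrix.zero_apply, mul_zero, neg_mul, Complex.star_def, smul_eq_mul]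
        refine Eq.trans (Finset.sum_congr rfl fun i _ => ?_) h0
        ring
      · -- B column
        simp only [hM, hz, Matrix.vecMul, dotProduct, Pi.zero_apply,
          Fintype.sum_sum_type, Sum.elim_inl, Sum.elim_inr, zero_mul,
          Finset.sum_const_zero, zero_add, Matrix.fromCols,
          Matrix.of_apply, Matrix.fromRows_apply_inr, Matrix.zero_apply, mul_zero,
          Pi.neg_apply, neg_mul, neg_zero]
    have hz0 := aux_vecMul_eq_zero M hMrank z hzM
    have : star x = 0 := by
      funext k
      have := congrFun hz0 (Sum.inr (Sum.inr k))
      simpa [hz, neg_eq_zero] using this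
    have := congrArg star this
    simpa using this
  -- conclude the rank
  have hker : LinearMap.ker C.mulVecLin = ⊥ := Matrix.ker_mulVecLin_eq_bot_iff.mpr hinj
  rw [Matrix.rank, LinearMap.finrank_range_of_inj (LinearMap.ker_eq_bot.mp hker)]
  simp
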